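/- Suppose b₁, b₂ : [0,T] × Ω → ℝ solve ∂t bⱼ = R(nⱼ, bⱼ, Nⱼ) with the same initial condition b₀, where R is globally Lipschitz in all arguments with constant L. Then for every T̃ ∈ (0,T], ‖b₁ - b₂‖²_{L∞(0,T̃;L∞(Ω))} ≤ C(L,T) T̃ ( ‖n₁ - n₂‖²_{L∞(0,T̃;L∞(Ω))} + ‖N₁ - N₂‖²_{L∞(0,T̃;L∞(Ω))} ). -/
import Mathlib

open MeasureTheory Set

set_option maxHeartbeats 1000000 in
/-- Stability of the cross-link ODE `∂ₜ bⱼ = R(nⱼ, bⱼ, Nⱼ)` with common initial data: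
`‖b₁ - b₂‖²_{L∞(0,T̃;L∞)} ≤ C(L,T) T̃ (‖n₁-n₂‖²_{L∞L∞} + ‖N₁-N₂‖²_{L∞L∞})` for all `T̃ ∈ (0,T]`. -/
theorem stmt2 {Ω : Type*} [MeasureSpace Ω] [IsFiniteMeasure (volume : Measure Ω)]
    (T L : ℝ) (hT : 0 < T) (hL : 0 ≤ L) :
    ∃ C > 0,
      ∀ (R : ℝ × ℝ × ℝ → ℝ),
        (∀ p q : ℝ × ℝ × ℝ,
          |R p - R q| ≤ L * (|p.1 - q.1| + |p.2.1 - q.2.1| + |p.2.2 - q.2.2|)) →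
      ∀ (b₀ : Ω → ℝ) (n₁ n₂ N₁ N₂ b₁ b₂ : ℝ → Ω → ℝ),
        (∀ x, ∀ t ∈ Icc (0:ℝ) T,
          b₁ t x = b₀ x + ∫ s in (0:ℝ)..t, R (n₁ s x, b₁ s x, N₁ s x)) →
        (∀ x, ∀ t ∈ Icc (0:ℝ) T,
          b₂ t x = b₀ x + ∫ s in (0:ℝ)..t, R (n₂ s x, b₂ s x, N₂ s x)) →
        (∀ x, ∀ t ∈ Icc (0:ℝ) T,
          IntervalIntegrable (fun s => R (n₁ s x, b₁ s x, N₁ s x)) volume 0 t) →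
        (∀ x, ∀ t ∈ Icc (0:ℝ) T,
          IntervalIntegrable (fun s => R (n₂ s x, b₂ s x, N₂ s x)) volume 0 t) →
      ∀ T' ∈ Ioc (0:ℝ) T, ∀ Kn KN : ℝ, 0 ≤ Kn → 0 ≤ KN →
        (∀ᵐ x, ∀ t ∈ Icc (0:ℝ) T',
          |n₁ t x - n₂ t x| ≤ Kn ∧ |N₁ t x - N₂ t x| ≤ KN) →
        ∀ᵐ x, ∀ t ∈ Icc (0:ℝ) T',
          (b₁ t x - b₂ t x) ^ 2 ≤ C * T' * (Kn ^ 2 + KN ^ 2) := by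
  set L' : ℝ := L + 1 with hL'def
  have hL' : 0 < L' := by positivity
  refine ⟨2 * L' ^ 2 * T * Real.exp (2 * L' * T), by positivity, ?_⟩
  intro R hR b₀ n₁ n₂ N₁ N₂ b₁ b₂ hb₁ hb₂ hi₁ hi₂ T' hT' Kn KN hKn hKN hae
  obtain ⟨hT'0, hT'T⟩ := hT'
  have hsub : Icc (0:ℝ) T' ⊆ Icc 0 T := Icc_subset_Icc le_rfl hT'T
  filter_upwards [hae] with x hx
  -- the two integrands
  set g₁ : ℝ → ℝ := fun s => R (n₁ s x, b₁ s x, N₁ s x) with hg₁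
  set g₂ : ℝ → ℝ := fun s => R (n₂ s x, b₂ s x, N₂ s x) with hg₂
  set g : ℝ → ℝ := fun s => g₁ s - g₂ s with hg
  set F : ℝ → ℝ := fun t => ∫ s in (0:ℝ)..t, g s with hF
  have hT'mem : T' ∈ Icc (0:ℝ) T := ⟨hT'0.le, hT'T⟩
  have hgint : ∀ t ∈ Icc (0:ℝ) T, IntervalIntegrable g volume 0 t :=
    fun t ht => (hi₁ x t ht).sub (hi₂ x t ht)
  -- b₁ - b₂ = F on [0,T]
  have hdiff : ∀ t ∈ Icc (0:ℝ) T, b₁ t x - b₂ t x = F t := by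
    intro t ht
    rw [hb₁ x t ht, hb₂ x t ht]
    have := intervalIntegral.integral_sub (hi₁ x t ht) (hi₂ x t ht)
    simp only [hF, hg, hg₁, hg₂]
    rw [this]
    ring
  -- F continuous on [0,T']
  have hFcont : ContinuousOn F (Icc 0 T') := by
    have := intervalIntegral.continuousOn_primitive_interval'
      (hgint T' hT'mem) (by simp [hT'0.le] : (0:ℝ) ∈ uIcc 0 T')
    rwa [uIcc_of_le hT'0.le] at this
  -- a continuous extension of |F| via clamping
  set proj : ℝ → ℝ := fun s => max 0 (min s T') with hproj
  have hprojcont : Continuous proj := continuous_const.max (continuous_id.min continuous_const)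
  have hprojmem : ∀ s, proj s ∈ Icc (0:ℝ) T' := by
    intro s
    constructor
    · exact le_max_left _ _
    · exact max_le hT'0.le (min_le_right _ _)
  have hprojeq : ∀ s ∈ Icc (0:ℝ) T', proj s = s := by
    intro s hs
    simp [hproj, min_eq_left hs.2, max_eq_right hs.1]
  set h : ℝ → ℝ := fun s => L' * ((Kn + KN) + |F (proj s)|) with hh
  have hhcont : Continuous h := by
    have h1 : Continuous fun s => F (proj s) := hFcont.comp_continuous hprojcont hprojmem
    exact continuous_const.mul (continuous_const.add h1.abs)
  have hhnonneg : ∀ s, 0 ≤ h s := by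
    intro s
    have : 0 ≤ (Kn + KN) + |F (proj s)| := by positivity
    exact mul_nonneg hL'.le this
  set u : ℝ → ℝ := fun t => ∫ s in (0:ℝ)..t, h s with hu
  have hucont : Continuous u :=
    intervalIntegral.continuous_primitive (fun a b => hhcont.intervalIntegrable a b) 0
  -- pointwise bound on |g| over [0,T']
  have hgbound : ∀ s ∈ Icc (0:ℝ) T', |g s| ≤ h s := by
    intro s hs
    have hs' : s ∈ Icc (0:ℝ) T := hsub hs
    have h1 := (hx s hs).1
    have h2 := (hx s hs).2
    have hb : |b₁ s x - b₂ s x| = |F (proj s)| := by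
      rw [hprojeq s hs, hdiff s hs']
    have := hR (n₁ s x, b₁ s x, N₁ s x) (n₂ s x, b₂ s x, N₂ s x)
    simp only [hg, hg₁, hg₂] at this ⊢
    calc |R (n₁ s x, b₁ s x, N₁ s x) - R (n₂ s x, b₂ s x, N₂ s x)|
        ≤ L * (|n₁ s x - n₂ s x| + |b₁ s x - b₂ s x| + |N₁ s x - N₂ s x|) := this
      _ ≤ L' * ((Kn + KN) + |F (proj s)|) := by
          rw [← hb]
          have habs : (0:ℝ) ≤ |b₁ s x - b₂ s x| := abs_nonneg _
          nlinarith [abs_nonneg (n₁ s x - n₂ s x), abs_nonneg (N₁ s x - N₂ s x)]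
  -- |F t| ≤ u t on [0,T']
  have hFu : ∀ t ∈ Icc (0:ℝ) T', |F t| ≤ u t := by
    intro t ht
    have htT : t ∈ Icc (0:ℝ) T := hsub ht
    have h1 : |F t| ≤ ∫ s in (0:ℝ)..t, |g s| :=
      intervalIntegral.abs_integral_le_integral_abs ht.1
    have h2 : (∫ s in (0:ℝ)..t, |g s|) ≤ ∫ s in (0:ℝ)..t, h s := by
      apply intervalIntegral.integral_mono_on ht.1 (hgint t htT).abs
        (hhcont.intervalIntegrable 0 t)
      intro s hs
      exact hgbound s ⟨hs.1, hs.2.trans ht.2⟩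
    exact h1.trans h2
  -- Gronwall for u
  have hu0 : u 0 = 0 := intervalIntegral.integral_same
  have huderiv : ∀ t ∈ Ico (0:ℝ) T', HasDerivWithinAt u (h t) (Ici t) t := by
    intro t _
    exact (intervalIntegral.integral_hasDerivAt_right (hhcont.intervalIntegrable 0 t)
      (hhcont.stronglyMeasurable.stronglyMeasurableAtFilter) hhcont.continuousAt).hasDerivWithinAt
  have hubound : ∀ t ∈ Ico (0:ℝ) T', ‖h t‖ ≤ L' * ‖u t‖ + L' * (Kn + KN) := by
    intro t ht
    have ht' : t ∈ Icc (0:ℝ) T' := ⟨ht.1, ht.2.le⟩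
    have h1 : |F (proj t)| ≤ u t := by rw [hprojeq t ht']; exact hFu t ht'
    have h2 : u t ≤ ‖u t‖ := le_abs_self _
    rw [Real.norm_eq_abs, abs_of_nonneg (hhnonneg t)]
    simp only [hh]
    nlinarith [abs_nonneg (F (proj t))]
  have hua : ‖u 0‖ ≤ (0:ℝ) := by rw [hu0]; simp
  have hugron := norm_le_gronwallBound_of_norm_deriv_right_le hucont.continuousOn huderiv
    hua hubound
  -- conclude
  intro t ht
  have hut := hugron t ht
  rw [gronwallBound_of_K_ne_0 hL'.ne'] at hut
  simp only [zero_mul, zero_add, sub_zero] at hut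
  have heq : L' * (Kn + KN) / L' * (Real.exp (L' * t) - 1)
      = (Kn + KN) * (Real.exp (L' * t) - 1) := by
    field_simp
  rw [heq] at hut
  have key : |F t| ≤ (Kn + KN) * (Real.exp (L' * t) - 1) :=
    (hFu t ht).trans ((le_abs_self _).trans hut)
  -- exp(L't) - 1 ≤ L' t exp(L' T)
  have hexp : Real.exp (L' * t) - 1 ≤ L' * t * Real.exp (L' * T) := by
    have h0 : 0 ≤ L' * t := mul_nonneg hL'.le ht.1
    have h1 : Real.exp (L' * t) - 1 ≤ L' * t * Real.exp (L' * t) := by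
      have := Real.add_one_le_exp (-(L' * t))
      have hpos := Real.exp_pos (L' * t)
      rw [Real.exp_neg] at this
      have hinv : (Real.exp (L' * t))⁻¹ * Real.exp (L' * t) = 1 := inv_mul_cancel₀ hpos.ne'
      nlinarith [mul_le_mul_of_nonneg_right this hpos.le]
    have h2 : Real.exp (L' * t) ≤ Real.exp (L' * T) := by
      apply Real.exp_le_exp.mpr
      have := ht.2.trans hT'T
      nlinarith
    nlinarith [Real.exp_pos (L' * t)]
  have hKey2 : |F t| ≤ (Kn + KN) * (L' * t * Real.exp (L' * T)) := by
    refine key.trans ?_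
    have : 0 ≤ Kn + KN := by linarith
    exact mul_le_mul_of_nonneg_left hexp this
  rw [hdiff t (hsub ht)]
  have hFt : (F t) ^ 2 ≤ ((Kn + KN) * (L' * t * Real.exp (L' * T))) ^ 2 := by
    rw [← sq_abs (F t)]
    apply pow_le_pow_left₀ (abs_nonneg _) hKey2 2
  refine hFt.trans ?_
  have htT' : t ≤ T' := ht.2
  have ht0 : 0 ≤ t := ht.1
  have hE : Real.exp (L' * T) ^ 2 = Real.exp (2 * L' * T) := by
    rw [← Real.exp_nat_mul]
    ring_nf
  have hEpos := Real.exp_pos (2 * L' * T)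
  have hEpos1 := Real.exp_pos (L' * T)
  have hKsq : (Kn + KN) ^ 2 ≤ 2 * (Kn ^ 2 + KN ^ 2) := by nlinarith [sq_nonneg (Kn - KN)]
  have ht2 : t ^ 2 ≤ T' * T := by nlinarith
  have e1 : (Kn + KN) ^ 2 * t ^ 2 ≤ (2 * (Kn ^ 2 + KN ^ 2)) * (T' * T) :=
    mul_le_mul hKsq ht2 (sq_nonneg t) (by positivity)
  calc ((Kn + KN) * (L' * t * Real.exp (L' * T))) ^ 2
      = ((Kn + KN) ^ 2 * t ^ 2) * (L' ^ 2 * Real.exp (2 * L' * T)) := by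
        rw [← hE]; ring
    _ ≤ ((2 * (Kn ^ 2 + KN ^ 2)) * (T' * T)) * (L' ^ 2 * Real.exp (2 * L' * T)) :=
        mul_le_mul_of_nonneg_right e1 (by positivity)
    _ = 2 * L' ^ 2 * T * Real.exp (2 * L' * T) * T' * (Kn ^ 2 + KN ^ 2) := by ring
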